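/- Orbits of nearby points under maps with smaller middle interval (Lemma 2.4). Let λ > 0 be irrational, let 0 < ℓ' < ℓ ≤ λ, and let x ∈ I \ [1, 1+ℓ] with n_ℓ(x) < ∞. Suppose there exists 0 ≤ n ≤ n_ℓ(x) with g^n(x) ≤ 1, and set d⁻(x) = 1 − max{g^n(x) : 0 ≤ n ≤ n_ℓ(x), g^n(x) ≤ 1}. Then for every x' ∈ I with x − (ℓ − ℓ') < x' < x + d⁻(x): g_ℓ^n(x) − g_{ℓ'}^n(x') = x − x' for all 0 ≤ n ≤ n_ℓ(x), and n_{ℓ'}(x') ≥ n_ℓ(x). -/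

import Mathlib

open Real Set
open scoped Classical

noncomputable section

/-- The interval map g_ℓ with middle interval (1, 1+ℓ) of fixed points:
g_ℓ(x) = x+λ on [0,1], x on (1,1+ℓ), x−1 on [1+ℓ, 1+λ]. -/
def gl (lam l x : ℝ) : ℝ :=
  if x ≤ 1 then x + lam else if x < 1 + l then x else x - 1

/-- The interval exchange g(x) = x+λ on [0,1], x−1 on (1, 1+λ]. -/
def g0 (lam x : ℝ) : ℝ := if x ≤ 1 then x + lam else x - 1

/-- The set of positive times at which the g_ℓ-orbit of x visits [1, 1+ℓ]. -/
def hitSetI (lam l x : ℝ) : Set ℕ :=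
  {n : ℕ | 0 < n ∧ (gl lam l)^[n] x ∈ Set.Icc 1 (1 + l)}

/-- The first hitting time n_ℓ(x) of x to [1, 1+ℓ] (as a natural number; 0 if
the orbit never hits). -/
def nhit (lam l x : ℝ) : ℕ := sInf (hitSetI lam l x)

/-- The first hitting time n_ℓ(x) of x to [1, 1+ℓ], with value ∞ ∈ ℕ∪{∞} if the
orbit never hits. -/
def nhitE (lam l x : ℝ) : ℕ∞ := sInf ((fun n : ℕ => (n : ℕ∞)) '' hitSetI lam l x)

/-- The first hitting map r_ℓ(x) = g_ℓ^{n_ℓ(x)}(x). -/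
def rmap (lam l x : ℝ) : ℝ := (gl lam l)^[nhit lam l x] x

/-- r'_ℓ(x) = r_ℓ(x) outside [1,1+ℓ] and x on [1,1+ℓ]. -/
def rmap' (lam l x : ℝ) : ℝ := if x ∈ Set.Icc 1 (1 + l) then x else rmap lam l x

/-- The left bifurcation set Λ_L (hitting times compared in ℕ∪{∞}). -/
def LamL (lam : ℝ) : Set ℝ :=
  {l | 0 < l ∧ l ≤ lam ∧ ∀ l' : ℝ, 0 < l' → l' < l → nhitE lam l 1 < nhitE lam l' 1}

/-- The right bifurcation set Λ_R (hitting times compared in ℕ∪{∞}). -/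
def LamR (lam : ℝ) : Set ℝ :=
  {l | 0 < l ∧ l ≤ lam ∧
    ∀ l' : ℝ, 0 < l' → l' < l → nhitE lam l (1 + l) < nhitE lam l' (1 + l')}


lemma gl_eq_g0 (lam l y : ℝ) (hy : y ∉ Set.Icc 1 (1 + l)) : gl lam l y = g0 lam y := by
  unfold gl g0
  by_cases h1 : y ≤ 1
  · simp [h1]
  · push_neg at h1
    simp only [Set.mem_Icc, not_and, not_le] at hy
    have h2 : 1 + l < y := hy h1.le
    rw [if_neg (not_le.mpr h1), if_neg (not_lt.mpr h2.le), if_neg (not_le.mpr h1)]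

/-- **Lemma 2.4 (orbits of nearby points under maps with smaller middle
interval).** If 0 < ℓ' < ℓ ≤ λ, x ∈ I \ [1,1+ℓ] has finite hitting time and its
g-orbit up to the hitting time goes below 1, then for x' within
(x − (ℓ−ℓ'), x + d⁻(x)) the orbits of x under g_ℓ and of x' under g_{ℓ'} stay
parallel up to time n_ℓ(x), and n_{ℓ'}(x') ≥ n_ℓ(x). -/
theorem parallel_orbits
    (lam : ℝ) (hlam : 0 < lam) (hirr : Irrational lam)
    (l l' : ℝ) (hl'0 : 0 < l') (hl' : l' < l) (hl : l ≤ lam)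
    (x : ℝ) (hx : x ∈ Set.Icc 0 (1 + lam)) (hxm : x ∉ Set.Icc 1 (1 + l))
    (hfin : (hitSetI lam l x).Nonempty)
    (hbelow : ∃ n : ℕ, n ≤ nhit lam l x ∧ (g0 lam)^[n] x ≤ 1)
    (dm : ℝ)
    (hdm : dm = 1 - sSup {y : ℝ | ∃ n : ℕ, n ≤ nhit lam l x ∧ (g0 lam)^[n] x = y ∧ y ≤ 1}) :
    ∀ x' : ℝ, x' ∈ Set.Icc 0 (1 + lam) → x - (l - l') < x' → x' < x + dm →
      (∀ n : ℕ, n ≤ nhit lam l x → (gl lam l)^[n] x - (gl lam l')^[n] x' = x - x') ∧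
      nhitE lam l x ≤ nhitE lam l' x' := by
  intro x' hx' hlow hhigh
  set N := nhit lam l x with hNdef
  have hNmem : N ∈ hitSetI lam l x := Nat.sInf_mem hfin
  have hout : ∀ n, n < N → (gl lam l)^[n] x ∉ Set.Icc 1 (1 + l) := by
    intro n hn hmem
    rcases Nat.eq_zero_or_pos n with rfl | hpos
    · exact hxm hmem
    · exact absurd (Nat.sInf_le (show n ∈ hitSetI lam l x from ⟨hpos, hmem⟩)) (not_le.mpr hn)
  have heq : ∀ n, n ≤ N → (gl lam l)^[n] x = (g0 lam)^[n] x := by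
    intro n hn
    induction n with
    | zero => rfl
    | succ k ih =>
      have hk : k < N := Nat.lt_of_succ_le hn
      rw [Function.iterate_succ_apply', Function.iterate_succ_apply',
          gl_eq_g0 lam l _ (hout k hk), ih hk.le]
  set S := {y : ℝ | ∃ n : ℕ, n ≤ nhit lam l x ∧ (g0 lam)^[n] x = y ∧ y ≤ 1} with hSdef
  have hSbdd : BddAbove S := ⟨1, fun y hy => hy.choose_spec.2.2⟩
  have hmemS : ∀ n, n ≤ N → (g0 lam)^[n] x ≤ 1 → (g0 lam)^[n] x ≤ sSup S :=
    fun n hn h1 => le_csSup hSbdd ⟨n, hn, rfl, h1⟩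
  have hl0 : 0 < l := hl'0.trans hl'
  have hxx1 : x - x' < l - l' := by linarith
  have hxx2 : x' - x < dm := by linarith
  have hpar : ∀ n, n ≤ N → (gl lam l)^[n] x - (gl lam l')^[n] x' = x - x' := by
    intro n hn
    induction n with
    | zero => simp
    | succ k ih =>
      have hk : k < N := Nat.lt_of_succ_le hn
      have ihk := ih hk.le
      set y := (gl lam l)^[k] x with hy
      set y' := (gl lam l')^[k] x' with hy'
      have houtk := hout k hk
      rw [Function.iterate_succ_apply', Function.iterate_succ_apply', ← hy, ← hy']
      by_cases h1 : y ≤ 1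
      · have hyS : y ≤ sSup S := by
          have h2 := hmemS k hk.le (by rw [← heq k hk.le]; exact h1)
          rwa [← heq k hk.le] at h2
        have hy'1 : y' ≤ 1 := by linarith
        simp only [gl, if_pos h1, if_pos hy'1]
        linarith
      · push_neg at h1
        simp only [Set.mem_Icc, not_and, not_le] at houtk
        have h2 : 1 + l < y := houtk h1.le
        have h3 : 1 + l' < y' := by linarith
        have h4 : ¬ y' ≤ 1 := by linarith
        simp only [gl, if_neg (not_le.mpr h1), if_neg (not_lt.mpr h2.le), if_neg h4,
          if_neg (not_lt.mpr h3.le)]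
        linarith
  refine ⟨hpar, ?_⟩
  have h1 : nhitE lam l x ≤ (N : ℕ∞) := sInf_le ⟨N, hNmem, rfl⟩
  refine h1.trans (le_sInf ?_)
  rintro b ⟨m, hm, rfl⟩
  simp only [Nat.cast_le]
  by_contra hcon
  push_neg at hcon
  obtain ⟨hmpos, hmIcc⟩ := hm
  have hparm := hpar m hcon.le
  have houtm := hout m hcon
  set z := (gl lam l)^[m] x with hz
  set w := (gl lam l')^[m] x' with hw
  by_cases h1 : z ≤ 1
  · have hzS : z ≤ sSup S := by
      have h2 := hmemS m hcon.le (by rw [← heq m hcon.le]; exact h1)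
      rwa [← heq m hcon.le] at h2
    have : w < 1 := by linarith
    exact absurd hmIcc.1 (not_le.mpr this)
  · push_neg at h1
    simp only [Set.mem_Icc, not_and, not_le] at houtm
    have h2 : 1 + l < z := houtm h1.le
    have : 1 + l' < w := by linarith
    exact absurd hmIcc.2 (not_le.mpr this)


end
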